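/- The number of Bernoulli bridges of length 2n (paths with ±1 steps starting and ending at 0) having exactly k peaks equals binomial(n,k)^2. -/

import Mathlib

def ext' {m : ℕ} (f : Fin m → Bool) (j : ℕ) : Bool :=
  if h : j < m then f ⟨j, h⟩ else false

def trues {m : ℕ} (f : Fin m → Bool) : ℕ :=
  (Finset.univ.filter (fun i => f i = true)).card

def desc {m : ℕ} (f : Fin m → Bool) : ℕ :=
  ((Finset.range (m - 1)).filter (fun i => ext' f i = true ∧ ext' f (i + 1) = false)).card

def cnt (m a k : ℕ) (c : Bool) : ℕ :=
  (Finset.univ.filter (fun f : Fin m → Bool =>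
    trues f = a ∧ desc f = k ∧ ext' f 0 = c)).card

def Ac (m a k : ℕ) : ℕ :=
  if a = 0 ∨ m < a then 0
  else if a = m then (if k = 0 then 1 else 0)
  else if k = 0 then 0
  else Nat.choose a k * Nat.choose (m - a - 1) (k - 1)

def Bc (m a k : ℕ) : ℕ :=
  if m = 0 then (if a = 0 ∧ k = 0 then 1 else 0)
  else if a < m then Nat.choose a k * Nat.choose (m - a - 1) k
  else 0

lemma ext'_cons_zero {m : ℕ} (b : Bool) (g : Fin m → Bool) :
    ext' (Fin.cons b g) 0 = b := by
  simp [ext']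

lemma ext'_cons_succ {m : ℕ} (b : Bool) (g : Fin m → Bool) (j : ℕ) :
    ext' (Fin.cons b g) (j + 1) = ext' g j := by
  unfold ext'
  by_cases h : j < m
  · rw [dif_pos (by omega : j + 1 < m + 1), dif_pos h]
    exact congrArg _ rfl
  · rw [dif_neg (by omega), dif_neg h]
lemma ext'_zero {m : ℕ} (f : Fin (m+1) → Bool) : ext' f 0 = f 0 := by
  unfold ext'
  rw [dif_pos (Nat.succ_pos m)]
  exact congrArg f (Fin.ext (by simp))

lemma cons_self {m : ℕ} (f : Fin (m+1) → Bool) (b : Bool) (h : ext' f 0 = b) :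
    f = Fin.cons b (Fin.tail f) := by
  rw [ext'_zero] at h
  rw [← h, Fin.cons_self_tail]

lemma trues_cons {m : ℕ} (b : Bool) (g : Fin m → Bool) :
    trues (Fin.cons b g) = (if b then 1 else 0) + trues g := by
  unfold trues
  rw [Finset.card_filter, Finset.card_filter, Fin.sum_univ_succ]
  simp [Fin.cons_zero, Fin.cons_succ]

lemma desc_cons {m : ℕ} (b : Bool) (g : Fin m → Bool) :
    desc (Fin.cons b g) =
      (if b = true ∧ ext' g 0 = false ∧ 0 < m then 1 else 0) + desc g := by
  rcases m with _ | m
  · simp [desc]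
  · unfold desc
    have e1 : m + 1 + 1 - 1 = m + 1 := rfl
    have e2 : m + 1 - 1 = m := rfl
    rw [e1, e2, Finset.card_filter, Finset.card_filter, Finset.sum_range_succ']
    have h1 : ∀ i : ℕ, ((if ext' (Fin.cons b g) (i+1) = true ∧ ext' (Fin.cons b g) (i+1+1) = false
        then 1 else 0) : ℕ) = if ext' g i = true ∧ ext' g (i+1) = false then 1 else 0 := by
      intro i
      rw [ext'_cons_succ, ext'_cons_succ]
    rw [Finset.sum_congr rfl (fun i _ => h1 i),
      show ext' (Fin.cons b g) 0 = b from ext'_cons_zero b g,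
      show ext' (Fin.cons b g) (0+1) = ext' g 0 from ext'_cons_succ b g 0]
    simp only [Nat.succ_pos, and_true]
    omega

lemma key_bij (m a k a' k' : ℕ) (b c : Bool)
    (ha : a' = (if b then 1 else 0) + a)
    (hk : k' = (if b = true ∧ c = false ∧ 0 < m then 1 else 0) + k) :
    (Finset.univ.filter (fun f : Fin (m+1) → Bool =>
      (trues f = a' ∧ desc f = k' ∧ ext' f 0 = b) ∧ ext' (Fin.tail f) 0 = c)).card
    = cnt m a k c := by
  unfold cnt
  apply Finset.card_nbij' (i := fun f => Fin.tail f) (j := fun g => Fin.cons b g)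
  · intro f hf
    simp only [Finset.mem_coe, Finset.mem_filter, Finset.mem_univ, true_and] at hf ⊢
    obtain ⟨⟨h1, h2, h3⟩, h4⟩ := hf
    rw [cons_self f b h3, trues_cons] at h1
    rw [cons_self f b h3, desc_cons] at h2
    rw [h4] at h2
    exact ⟨by omega, by omega, h4⟩
  · intro g hg
    simp only [Finset.mem_coe, Finset.mem_filter, Finset.mem_univ, true_and] at hg ⊢
    obtain ⟨g1, g2, g3⟩ := hg
    rw [trues_cons, desc_cons, g3]
    refine ⟨⟨by omega, by omega, ext'_cons_zero b g⟩, ?_⟩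
    rw [Fin.tail_cons]
    exact g3
  · intro f hf
    simp only [Finset.mem_coe, Finset.mem_filter, Finset.mem_univ, true_and] at hf
    exact (cons_self f b hf.1.2.2).symm
  · intro g _
    simp

lemma cnt_split (m a k : ℕ) (b : Bool) :
    cnt (m+1) a k b =
      (Finset.univ.filter (fun f : Fin (m+1) → Bool =>
        (trues f = a ∧ desc f = k ∧ ext' f 0 = b) ∧ ext' (Fin.tail f) 0 = true)).card +
      (Finset.univ.filter (fun f : Fin (m+1) → Bool =>
        (trues f = a ∧ desc f = k ∧ ext' f 0 = b) ∧ ext' (Fin.tail f) 0 = false)).card := by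
  unfold cnt
  have h := Finset.card_filter_add_card_filter_not
    (s := Finset.univ.filter (fun f : Fin (m+1) → Bool => trues f = a ∧ desc f = k ∧ ext' f 0 = b))
    (p := fun f => ext' (Fin.tail f) 0 = true)
  rw [Finset.filter_filter, Finset.filter_filter] at h
  rw [← h]
  congr 1
  apply congrArg Finset.card
  apply Finset.filter_congr
  intro x _
  simp [Bool.not_eq_true]

lemma fin0_facts (f : Fin 0 → Bool) : trues f = 0 ∧ desc f = 0 ∧ ext' f 0 = false := by
  refine ⟨?_, ?_, ?_⟩ <;> simp [trues, desc, ext']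

lemma cnt_zero (a k : ℕ) (c : Bool) :
    cnt 0 a k c = if a = 0 ∧ k = 0 ∧ c = false then 1 else 0 := by
  unfold cnt
  by_cases hc : a = 0 ∧ k = 0 ∧ c = false
  · rw [if_pos hc]
    rw [Finset.filter_true_of_mem (fun f _ => by
      obtain ⟨h1, h2, h3⟩ := fin0_facts f
      exact ⟨by omega, by omega, by rw [h3, hc.2.2]⟩)]
    simp
  · rw [if_neg hc, Finset.card_eq_zero, Finset.filter_eq_empty_iff]
    intro f _
    obtain ⟨h1, h2, h3⟩ := fin0_facts f
    rintro ⟨e1, e2, e3⟩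
    rw [h3] at e3
    exact hc ⟨by omega, by omega, e3.symm⟩

lemma cnt_succ_false (m a k : ℕ) :
    cnt (m + 1) a k false = cnt m a k true + cnt m a k false := by
  rw [cnt_split,
    key_bij m a k a k false true (by simp [Nat.add_comm]) (by simp),
    key_bij m a k a k false false (by simp [Nat.add_comm]) (by simp)]

lemma cnt_true_a0 (m k : ℕ) : cnt (m + 1) 0 k true = 0 := by
  unfold cnt
  rw [Finset.card_eq_zero, Finset.filter_eq_empty_iff]
  intro f _
  rintro ⟨h1, h2, h3⟩
  rw [cons_self f true h3, trues_cons] at h1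
  simp at h1

lemma cnt_succ_true (m a k : ℕ) (hm : 0 < m) :
    cnt (m + 1) a k true =
      if a = 0 then 0 else
        cnt m (a - 1) k true + (if k = 0 then 0 else cnt m (a - 1) (k - 1) false) := by
  rcases a with _ | a
  · rw [if_pos rfl, cnt_true_a0]
  rw [if_neg (Nat.succ_ne_zero a)]
  have e1 : a + 1 - 1 = a := rfl
  rw [e1, cnt_split,
    key_bij m a k (a+1) k true true (by simp [Nat.add_comm]) (by simp)]
  rcases k with _ | k
  · rw [if_pos rfl]
    have h0 : (Finset.univ.filter (fun f : Fin (m+1) → Bool =>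
        (trues f = a + 1 ∧ desc f = 0 ∧ ext' f 0 = true) ∧ ext' (Fin.tail f) 0 = false)).card = 0 := by
      rw [Finset.card_eq_zero, Finset.filter_eq_empty_iff]
      intro f _
      rintro ⟨⟨h1, h2, h3⟩, h4⟩
      rw [cons_self f true h3, desc_cons, h4] at h2
      rw [if_pos ⟨rfl, rfl, hm⟩] at h2
      omega
    rw [h0]
  · rw [if_neg (Nat.succ_ne_zero k)]
    have e2 : k + 1 - 1 = k := rfl
    rw [e2, key_bij m a k (a+1) (k+1) true false (by simp [Nat.add_comm]) (by simp [Nat.add_comm, hm])]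

lemma cnt_one_true (a k : ℕ) :
    cnt 1 a k true = if a = 1 ∧ k = 0 then 1 else 0 := by
  rcases a with _ | a
  · rw [cnt_true_a0]
    simp
  rw [cnt_split,
    key_bij 0 a k (a+1) k true true (by simp [Nat.add_comm]) (by simp),
    key_bij 0 a k (a+1) k true false (by simp [Nat.add_comm]) (by simp),
    cnt_zero, cnt_zero]
  split_ifs <;> simp_all

lemma choose_pascal (a k : ℕ) (ha : 0 < a) (hk : 0 < k) :
    Nat.choose a k = Nat.choose (a-1) (k-1) + Nat.choose (a-1) k := by
  have h1 : a - 1 + 1 = a := by omega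
  have h2 : k - 1 + 1 = k := by omega
  rw [← h1, ← h2, Nat.choose_succ_succ' (a-1) (k-1), h1, h2]

lemma Bc_rec (m a k : ℕ) : Bc (m + 1) a k = Ac m a k + Bc m a k := by
  unfold Ac Bc
  split_ifs <;> first
    | omega
    | (exact absurd rfl (by assumption))
    | exact False.elim (by assumption)
    | skip
  · -- a=0, m=0, k=0
    have ha : a = 0 := by omega
    have hk : k = 0 := by omega
    subst ha; subst hk; simp
  · -- m=0, a=0, k≠0
    have ha : a = 0 := by omega
    have hk : 0 < k := by omega
    subst ha; simp [Nat.choose_eq_zero_of_lt hk]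
  · -- a=0, m≠0, a<m
    have ha : a = 0 := by omega
    subst ha
    rcases k with _ | k
    · simp
    · simp [Nat.choose_eq_zero_of_lt (Nat.succ_pos k)]
  · -- a=m, k=0
    have hk : k = 0 := by assumption
    have ha : a = m := by assumption
    subst hk; subst ha; simp
  · -- a=m, k≠0
    have ha : a = m := by assumption
    subst ha
    have h0 : a + 1 - a - 1 = 0 := by omega
    rw [h0, Nat.choose_eq_zero_of_lt (by omega : 0 < k)]
    simp
  · -- a<m, k=0
    have hk : k = 0 := by assumption
    subst hk; simp
  · -- Pascal
    have e : m + 1 - a - 1 = m - a := by omega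
    rw [e, choose_pascal (m - a) k (by omega) (by omega), Nat.mul_add]

lemma Ac_rec (m a k : ℕ) (hm : 0 < m) :
    Ac (m + 1) a k =
      if a = 0 then 0 else
        Ac m (a - 1) k + (if k = 0 then 0 else Bc m (a - 1) (k - 1)) := by
  unfold Ac Bc
  split_ifs <;> first
    | omega
    | (exact absurd rfl (by assumption))
    | exact False.elim (by assumption)
    | skip
  · -- a=1 case
    have ha : a = 1 := by omega
    subst ha
    simp only [Nat.zero_add]
    rcases Nat.lt_or_ge k 2 with hk2 | hk2
    · have hk1 : k = 1 := by omega
      subst hk1; simp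
    · rw [Nat.choose_eq_zero_of_lt (by omega : 1 < k),
        Nat.choose_eq_zero_of_lt (by omega : 0 < k - 1)]
      simp
  · -- main Pascal
    have e1 : m + 1 - a - 1 = m - a := by omega
    have e2 : m - (a - 1) - 1 = m - a := by omega
    rw [e1, e2, choose_pascal a k (by omega) (by omega), Nat.add_mul]
    omega

lemma cnt_eq : ∀ m a k, cnt m a k true = Ac m a k ∧ cnt m a k false = Bc m a k := by
  intro m
  induction m with
  | zero =>
    intro a k
    constructor <;> simp [cnt_zero, Ac, Bc] <;> split <;> simp_all <;> omega
  | succ m ih =>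
    intro a k
    rcases Nat.eq_zero_or_pos m with hm | hm
    · subst hm
      refine ⟨?_, ?_⟩
      · rw [cnt_one_true]
        unfold Ac
        split_ifs <;> simp_all <;> omega
      · rw [cnt_succ_false, (ih a k).1, (ih a k).2, Bc_rec]
    · refine ⟨?_, ?_⟩
      · rw [cnt_succ_true m a k hm, Ac_rec m a k hm, (ih (a-1) k).1,
          (ih (a-1) (k-1)).2]
      · rw [cnt_succ_false, (ih a k).1, (ih a k).2, Bc_rec]

/-- The value at time `i` of the Bernoulli path with `n` steps encoded by
`f : Fin n → Bool` (`true` = step `+1`, `false` = step `-1`), started at `0`. -/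
def pathVal {n : ℕ} (f : Fin n → Bool) (i : ℕ) : ℤ :=
  ∑ j ∈ Finset.range i, (if h : j < n then (if f ⟨j, h⟩ then (1 : ℤ) else -1) else 0)

/-- `x` is a peak: `1 ≤ x ≤ n-1` and `S(x-1) = S(x+1) = S(x) - 1`. -/
def IsPeak {n : ℕ} (f : Fin n → Bool) (x : ℕ) : Prop :=
  0 < x ∧ x < n ∧ pathVal f x = pathVal f (x - 1) + 1 ∧
    pathVal f (x + 1) = pathVal f x - 1

instance {n : ℕ} (f : Fin n → Bool) (x : ℕ) : Decidable (IsPeak f x) := by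
  unfold IsPeak; infer_instance

/-- Number of peaks of the path encoded by `f`. -/
def numPeaks {n : ℕ} (f : Fin n → Bool) : ℕ :=
  ((Finset.range n).filter (fun x => IsPeak f x)).card

lemma pathVal_full {m : ℕ} (f : Fin m → Bool) : pathVal f m = 2 * (trues f : ℤ) - m := by
  unfold pathVal
  rw [Finset.sum_range]
  have h1 : ∀ i : Fin m, (if h : (i : ℕ) < m then (if f ⟨i, h⟩ then (1:ℤ) else -1) else 0)
      = 2 * (if f i then (1:ℤ) else 0) - 1 := by
    intro i
    rw [dif_pos i.isLt]
    by_cases hf : f i = true <;> simp [Fin.eta, hf]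
  rw [Finset.sum_congr rfl (fun i _ => h1 i), Finset.sum_sub_distrib, ← Finset.mul_sum]
  have ht : (trues f : ℤ) = ∑ i : Fin m, (if f i then (1:ℤ) else 0) := by
    unfold trues
    rw [Finset.card_filter]
    push_cast
    apply Finset.sum_congr rfl
    intro i _
    by_cases h : f i = true <;> simp [h]
  rw [← ht]
  simp

lemma bridge_iff (n : ℕ) (f : Fin (2*n) → Bool) : pathVal f (2*n) = 0 ↔ trues f = n := by
  rw [pathVal_full]
  constructor <;> intro h <;> omega

lemma pathVal_succ {m : ℕ} (f : Fin m → Bool) (j : ℕ) (hj : j < m) :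
    pathVal f (j + 1) = pathVal f j + (if ext' f j then (1:ℤ) else -1) := by
  unfold pathVal ext'
  rw [Finset.sum_range_succ, dif_pos hj, dif_pos hj]

lemma isPeak_iff {m : ℕ} (f : Fin m → Bool) (x : ℕ) :
    IsPeak f x ↔ 0 < x ∧ x < m ∧ ext' f (x-1) = true ∧ ext' f x = false := by
  have hstep : ∀ j, j < m → (pathVal f (j+1) = pathVal f j + 1 ↔ ext' f j = true) := by
    intro j hj
    rw [pathVal_succ f j hj]
    by_cases hb : ext' f j = true
    · simp [hb]
    · rw [if_neg hb]
      constructor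
      · intro h; omega
      · intro h; exact absurd h hb
  have hstep2 : ∀ j, j < m → (pathVal f (j+1) = pathVal f j - 1 ↔ ext' f j = false) := by
    intro j hj
    rw [pathVal_succ f j hj]
    by_cases hb : ext' f j = true
    · rw [if_pos hb]
      constructor
      · intro h; omega
      · intro h; rw [h] at hb; exact absurd hb (by simp)
    · simp [hb]
      omega
  unfold IsPeak
  constructor
  · rintro ⟨hx, hxm, h1, h2⟩
    refine ⟨hx, hxm, ?_, (hstep2 x hxm).mp h2⟩
    apply (hstep (x-1) (by omega)).mp
    rw [show x - 1 + 1 = x from by omega]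
    exact h1
  · rintro ⟨hx, hxm, h1, h2⟩
    refine ⟨hx, hxm, ?_, (hstep2 x hxm).mpr h2⟩
    have h3 := (hstep (x-1) (by omega)).mpr h1
    rw [show x - 1 + 1 = x from by omega] at h3
    exact h3

lemma numPeaks_eq_desc {m : ℕ} (f : Fin m → Bool) : numPeaks f = desc f := by
  unfold numPeaks desc
  apply Finset.card_nbij' (i := fun x => x - 1) (j := fun i => i + 1)
  · intro x hx
    simp only [Finset.mem_coe, Finset.mem_filter, Finset.mem_range] at hx ⊢
    obtain ⟨hxr, hp⟩ := hx
    rw [isPeak_iff] at hp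
    obtain ⟨h0, h1, h2, h3⟩ := hp
    refine ⟨by omega, h2, ?_⟩
    rw [show x - 1 + 1 = x from by omega]
    exact h3
  · intro i hi
    simp only [Finset.mem_coe, Finset.mem_filter, Finset.mem_range] at hi ⊢
    obtain ⟨hir, h1, h2⟩ := hi
    refine ⟨by omega, ?_⟩
    rw [isPeak_iff]
    exact ⟨by omega, by omega, by simpa using h1, h2⟩
  · intro x hx
    simp only [Finset.mem_coe, Finset.mem_filter, Finset.mem_range] at hx
    have := (isPeak_iff f x).mp hx.2
    dsimp only
    omega
  · intro i _
    dsimp only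
    omega

lemma AB_eq (n k : ℕ) : Ac (2*n) n k + Bc (2*n) n k = (n.choose k)^2 := by
  rcases Nat.eq_zero_or_pos n with rfl | hn
  · rcases k with _ | k <;> simp [Ac, Bc]
  · have hA : Ac (2*n) n k = if k = 0 then 0 else n.choose k * (n-1).choose (k-1) := by
      unfold Ac
      rw [if_neg (by omega), if_neg (by omega)]
      rcases Nat.eq_zero_or_pos k with rfl | hk
      · simp
      · rw [if_neg (by omega), if_neg (by omega), show 2*n - n - 1 = n - 1 from by omega]
    have hB : Bc (2*n) n k = n.choose k * (n-1).choose k := by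
      unfold Bc
      rw [if_neg (by omega), if_pos (by omega), show 2*n - n - 1 = n - 1 from by omega]
    rw [hA, hB]
    rcases Nat.eq_zero_or_pos k with rfl | hk
    · simp
    · rw [if_neg (by omega), ← Nat.mul_add, ← choose_pascal n k hn hk, pow_two]

/-- The number of Bernoulli bridges of length `2n` with exactly `k` peaks is
`binomial(n,k)^2`. -/
theorem card_bridges_with_k_peaks (n k : ℕ) :
    ((Finset.univ : Finset (Fin (2 * n) → Bool)).filter
        (fun f => pathVal f (2 * n) = 0 ∧ numPeaks f = k)).card
      = (n.choose k) ^ 2 := by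
  rw [Finset.filter_congr (fun f _ => by
    rw [bridge_iff, numPeaks_eq_desc] :
    ∀ f ∈ (Finset.univ : Finset (Fin (2*n) → Bool)),
      (pathVal f (2*n) = 0 ∧ numPeaks f = k) ↔ (trues f = n ∧ desc f = k))]
  have h := Finset.card_filter_add_card_filter_not
    (s := Finset.univ.filter (fun f : Fin (2*n) → Bool => trues f = n ∧ desc f = k))
    (p := fun f => ext' f 0 = true)
  rw [Finset.filter_filter, Finset.filter_filter] at h
  have h2 : (Finset.univ.filter (fun f : Fin (2*n) → Bool =>
      (trues f = n ∧ desc f = k) ∧ ¬ ext' f 0 = true)).card = cnt (2*n) n k false := by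
    unfold cnt
    apply congrArg Finset.card
    apply Finset.filter_congr
    intro f _
    simp [Bool.not_eq_true, and_assoc]
  have h1 : (Finset.univ.filter (fun f : Fin (2*n) → Bool =>
      (trues f = n ∧ desc f = k) ∧ ext' f 0 = true)).card = cnt (2*n) n k true := by
    unfold cnt
    apply congrArg Finset.card
    apply Finset.filter_congr
    intro f _
    simp [and_assoc]
  rw [← h, h1, h2, (cnt_eq (2*n) n k).1, (cnt_eq (2*n) n k).2, AB_eq]
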